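/- For the single-machine problem of selecting a subset of jobs and scheduling them to minimize the sum of completion times: if profit(j,C,L) denotes the maximum profit collectible by scheduling a subset of jobs {1,...,j} (sorted so that p_1 ≤ ... ≤ p_j) with sum of completion times at most C and makespan exactly L, then profit(j,C,L) = max{ profit(j−1,C,L), π_j + profit(j−1, C−L, L−p_j) }. -/

import Mathlib

/-- Makespan of a set of jobs `S` scheduled on a single machine. -/
def mkspan {n : ℕ} (p : Fin n → ℕ) (S : Finset (Fin n)) : ℕ := ∑ k ∈ S, p k

/-- Sum of completion times of the jobs of `S` scheduled in increasing index order
(i.e. SPT order, when processing times are sorted). -/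
def sumC {n : ℕ} (p : Fin n → ℕ) (S : Finset (Fin n)) : ℕ :=
  ∑ k ∈ S, ∑ k' ∈ S.filter (fun k' => k' ≤ k), p k'

/-- `profitDP p π j C L` is the maximum profit collectible by scheduling a subset of
the first `j` jobs (SPT order) with sum of completion times at most `C` and makespan
exactly `L` (`⊥` if no such subset exists). -/
def profitDP {n : ℕ} (p π : Fin n → ℕ) (j : ℕ) (C L : ℤ) : WithBot ℕ :=
  ((Finset.univ : Finset (Fin n)).powerset.filter
      (fun S => (∀ k : Fin n, k ∈ S → (k : ℕ) < j) ∧ (sumC p S : ℤ) ≤ C ∧ (mkspan p S : ℤ) = L)).sup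
    (fun S => ((∑ k ∈ S, π k : ℕ) : WithBot ℕ))

lemma mkspan_insert {n : ℕ} (p : Fin n → ℕ) (j : Fin n) (S : Finset (Fin n))
    (h : ∀ k ∈ S, k < j) : mkspan p (insert j S) = p j + mkspan p S := by
  have hj : j ∉ S := fun hm => lt_irrefl j (h j hm)
  simp [mkspan, Finset.sum_insert hj]

lemma sumC_insert {n : ℕ} (p : Fin n → ℕ) (j : Fin n) (S : Finset (Fin n))
    (h : ∀ k ∈ S, k < j) :
    sumC p (insert j S) = mkspan p (insert j S) + sumC p S := by
  have hj : j ∉ S := fun hm => lt_irrefl j (h j hm)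
  unfold sumC
  rw [Finset.sum_insert hj]
  congr 1
  · have h1 : (insert j S).filter (fun k' => k' ≤ j) = insert j S := by
      apply Finset.filter_true_of_mem
      intro k hk
      rcases Finset.mem_insert.mp hk with rfl | hk
      · exact le_refl _
      · exact le_of_lt (h k hk)
    rw [h1]; rfl
  · apply Finset.sum_congr rfl
    intro k hk
    rw [Finset.filter_insert, if_neg (not_le.mpr (h k hk))]

/-- The dynamic-programming recurrence: with processing times sorted in
non-decreasing order, `profit(j,C,L) = max{profit(j-1,C,L), π_j + profit(j-1, C-L, L-p_j)}`. -/
theorem stmt_7 (n : ℕ) (p π : Fin n → ℕ)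
    (hsorted : ∀ k k' : Fin n, k ≤ k' → p k ≤ p k')
    (j : Fin n) (C L : ℤ) :
    profitDP p π ((j : ℕ) + 1) C L =
      profitDP p π (j : ℕ) C L ⊔
        (((π j : ℕ) : WithBot ℕ) + profitDP p π (j : ℕ) (C - L) (L - (p j : ℤ))) := by
  unfold profitDP
  apply le_antisymm
  · -- LHS ≤ RHS
    apply Finset.sup_le
    intro S hS
    rw [Finset.mem_filter] at hS
    obtain ⟨-, hlt, hsum, hmk⟩ := hS
    by_cases hj : j ∈ S
    · -- erase j
      set S' := S.erase j with hS'def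
      have hS'lt : ∀ k ∈ S', k < j := by
        intro k hk
        have h1 := Finset.ne_of_mem_erase hk
        have h2 := hlt k (Finset.mem_of_mem_erase hk)
        rw [Fin.lt_def]
        have : (k : ℕ) ≠ (j : ℕ) := fun h => h1 (Fin.ext h)
        omega
      have hins : insert j S' = S := Finset.insert_erase hj
      have hmk' : mkspan p S = p j + mkspan p S' := by
        rw [← hins]; exact mkspan_insert p j S' hS'lt
      have hsum' : sumC p S = mkspan p S + sumC p S' := by
        conv_lhs => rw [← hins]
        rw [sumC_insert p j S' hS'lt, hins]
      have hmem : S' ∈ ((Finset.univ : Finset (Fin n)).powerset.filter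
          (fun T => (∀ k : Fin n, k ∈ T → (k : ℕ) < (j : ℕ)) ∧ (sumC p T : ℤ) ≤ C - L ∧
            (mkspan p T : ℤ) = L - (p j : ℤ))) := by
        rw [Finset.mem_filter]
        refine ⟨Finset.mem_powerset.mpr (Finset.subset_univ _),
          fun k hk => Fin.lt_def.mp (hS'lt k hk), ?_, ?_⟩
        · have : (sumC p S : ℤ) = L + (sumC p S' : ℤ) := by
            rw [hsum']; push_cast; omega
          omega
        · have : (mkspan p S : ℤ) = (p j : ℤ) + (mkspan p S' : ℤ) := by
            rw [hmk']; push_cast; ring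
          omega
      have hπ : (∑ k ∈ S, π k) = π j + ∑ k ∈ S', π k := by
        rw [← hins, Finset.sum_insert (fun hm => lt_irrefl j (hS'lt j hm))]
      calc ((∑ k ∈ S, π k : ℕ) : WithBot ℕ)
          = ((π j : ℕ) : WithBot ℕ) + ((∑ k ∈ S', π k : ℕ) : WithBot ℕ) := by
            rw [hπ]; push_cast; rfl
        _ ≤ ((π j : ℕ) : WithBot ℕ) + profitDP p π (j : ℕ) (C - L) (L - (p j : ℤ)) :=
            add_le_add_right (Finset.le_sup (f := fun S => ((∑ k ∈ S, π k : ℕ) : WithBot ℕ)) hmem) _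
        _ ≤ _ := le_sup_right
    · -- S avoids j
      have hmem : S ∈ ((Finset.univ : Finset (Fin n)).powerset.filter
          (fun T => (∀ k : Fin n, k ∈ T → (k : ℕ) < (j : ℕ)) ∧ (sumC p T : ℤ) ≤ C ∧
            (mkspan p T : ℤ) = L)) := by
        rw [Finset.mem_filter]
        refine ⟨Finset.mem_powerset.mpr (Finset.subset_univ _), ?_, hsum, hmk⟩
        intro k hk
        have h1 := hlt k hk
        have : (k : ℕ) ≠ (j : ℕ) := fun h => hj (Fin.ext h ▸ hk)
        omega
      exact le_trans (Finset.le_sup (f := fun S => ((∑ k ∈ S, π k : ℕ) : WithBot ℕ)) hmem) le_sup_left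
  · -- RHS ≤ LHS
    apply sup_le
    · apply Finset.sup_le
      intro S hS
      rw [Finset.mem_filter] at hS
      obtain ⟨hp, h1, h2, h3⟩ := hS
      exact Finset.le_sup (f := fun S => ((∑ k ∈ S, π k : ℕ) : WithBot ℕ)) (Finset.mem_filter.mpr
        ⟨hp, fun k hk => Nat.lt_succ_of_lt (h1 k hk), h2, h3⟩)
    · set T := ((Finset.univ : Finset (Fin n)).powerset.filter
          (fun S => (∀ k : Fin n, k ∈ S → (k : ℕ) < (j : ℕ)) ∧ (sumC p S : ℤ) ≤ C - L ∧
            (mkspan p S : ℤ) = L - (p j : ℤ))) with hTdef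
      rcases T.eq_empty_or_nonempty with hT | hT
      · show ((π j : ℕ) : WithBot ℕ) + T.sup _ ≤ _
        rw [hT]
        simp
      · obtain ⟨S', hS'T, hsup⟩ := Finset.exists_mem_eq_sup T hT
          (fun S => ((∑ k ∈ S, π k : ℕ) : WithBot ℕ))
        rw [Finset.mem_filter] at hS'T
        obtain ⟨-, hlt, hsum, hmk⟩ := hS'T
        have hS'lt : ∀ k ∈ S', k < j := fun k hk => Fin.lt_def.mpr (hlt k hk)
        have hjS' : j ∉ S' := fun hm => lt_irrefl j (hS'lt j hm)
        have hmem : insert j S' ∈ ((Finset.univ : Finset (Fin n)).powerset.filter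
            (fun S => (∀ k : Fin n, k ∈ S → (k : ℕ) < (j : ℕ) + 1) ∧ (sumC p S : ℤ) ≤ C ∧
              (mkspan p S : ℤ) = L)) := by
          rw [Finset.mem_filter]
          refine ⟨Finset.mem_powerset.mpr (Finset.subset_univ _), ?_, ?_, ?_⟩
          · intro k hk
            rcases Finset.mem_insert.mp hk with rfl | hk
            · omega
            · exact Nat.lt_succ_of_lt (hlt k hk)
          · rw [sumC_insert p j S' hS'lt, mkspan_insert p j S' hS'lt]
            push_cast
            omega
          · rw [mkspan_insert p j S' hS'lt]
            push_cast
            omega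
        show ((π j : ℕ) : WithBot ℕ) + T.sup _ ≤ _
        rw [hsup]
        calc ((π j : ℕ) : WithBot ℕ) + ((∑ k ∈ S', π k : ℕ) : WithBot ℕ)
            = ((∑ k ∈ insert j S', π k : ℕ) : WithBot ℕ) := by
              rw [Finset.sum_insert hjS']; push_cast; rfl
          _ ≤ _ := Finset.le_sup (f := fun S => ((∑ k ∈ S, π k : ℕ) : WithBot ℕ)) hmem
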